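/- An abstract rewriting system that is both algebraically terminating and exponentiation free is quasi-terminating. Here we model this abstractly: let → be a rewriting relation on a set A with a monoid of 'contexts' acting on A; if every infinite reduction sequence (a_n) contains indices k < k+l with a_{k+l} = C·a_k for some (possibly trivial) context C, and no reduction path goes from a to C·a for a nontrivial context C, then every infinite reduction sequence contains some element infinitely often. -/

import Mathlib

open Relation

/-- Algebraic termination + exponentiation freeness implies quasi-termination,
in the abstract setting of a monoid of contexts acting on the objects. -/
theorem quasiTerminating_of_algTerminating_of_expFree
    {M : Type*} [Monoid M] {A : Type*} [MulAction M A] (r : A → A → Prop)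
    -- algebraically terminating:
    (halg : ∀ f : ℕ → A, (∀ n, r (f n) (f (n + 1))) →
      ∃ k l, 1 ≤ l ∧ ∃ C : M, f (k + l) = C • f k)
    -- exponentiation free:
    (hexp : ∀ (a : A) (C : M), C ≠ 1 → ¬ ReflTransGen r a (C • a)) :
    -- quasi-terminating:
    ∀ f : ℕ → A, (∀ n, r (f n) (f (n + 1))) → ∃ a, {n : ℕ | f n = a}.Infinite := by
  intro f hf
  by_contra h
  push_neg at h
  have hfin : ∀ a : A, {n : ℕ | f n = a}.Finite := by
    intro a
    by_contra hinf
    exact hinf (h a)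
  -- last occurrence
  set last : ℕ → ℕ := fun i => sSup {j | f j = f i} with hlast
  have hbdd : ∀ i : ℕ, BddAbove {j | f j = f i} := fun i => (hfin (f i)).bddAbove
  have hmem : ∀ i : ℕ, f (last i) = f i := by
    intro i
    have hne : Set.Nonempty {j | f j = f i} := ⟨i, rfl⟩
    exact Nat.sSup_mem hne (hbdd i)
  have hle : ∀ i j : ℕ, f j = f i → j ≤ last i := fun i j hj => le_csSup (hbdd i) hj
  -- build the injective reduction sequence
  set m : ℕ → ℕ := fun n => Nat.rec 0 (fun _ prev => last prev + 1) n with hm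
  set g : ℕ → A := fun n => f (m n) with hg
  have hstep : ∀ n, r (g n) (g (n + 1)) := by
    intro n
    have : r (f (last (m n))) (f (last (m n) + 1)) := hf _
    rwa [hmem (m n)] at this
  have hmono : ∀ n, m n ≤ last (m n) := by
    intro n
    exact hle (m n) (m n) rfl
  have hlt : ∀ i j : ℕ, i < j → last (m i) < m j := by
    intro i j hij
    induction j with
    | zero => omega
    | succ j ih =>
      rcases Nat.lt_succ_iff_lt_or_eq.mp hij with h' | h'
      · have := ih h'
        have h2 := hmono j
        have : last (m i) < last (m j) + 1 := by omega
        exact this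
      · subst h'
        exact Nat.lt_succ_of_le (le_refl _)
  have hinj : ∀ i j : ℕ, i < j → g j ≠ g i := by
    intro i j hij heq
    have := hle (m i) (m j) heq
    have := hlt i j hij
    omega
  have hchain : ∀ k l : ℕ, ReflTransGen r (g k) (g (k + l)) := by
    intro k l
    induction l with
    | zero => exact ReflTransGen.refl
    | succ l ih => exact ih.tail (hstep (k + l))
  obtain ⟨k, l, hl, C, hC⟩ := halg g hstep
  by_cases hC1 : C = 1
  · rw [hC1, one_smul] at hC
    exact hinj k (k + l) (by omega) hC
  · exact hexp (g k) C hC1 (hC ▸ hchain k l)
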